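/- Define the sequence b₁ = 3/2, b_{n+1} = b_n(1 + 1/log b_n). Then (b_n) is strictly increasing and unbounded, and log b_n ∼ √(2n) as n → ∞ (in particular b_n → ∞). -/

import Mathlib

open Real Filter

lemma my_log_ge_third : (1/3 : ℝ) ≤ Real.log (3/2) := by
  rw [Real.le_log_iff_exp_le (by norm_num)]
  have h3 : Real.exp (1/3) ^ (3:ℕ) = Real.exp 1 := by
    rw [← Real.exp_nat_mul]; norm_num
  have he : Real.exp 1 < 2.7182818286 := Real.exp_one_lt_d9
  nlinarith [Real.exp_pos (1/3 : ℝ), sq_nonneg (Real.exp (1/3) - 3/2), sq_nonneg (Real.exp (1/3) + 3/2)]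

lemma my_log_le (L : ℝ) (hL : 0 < L) : Real.log (1 + 1/L) ≤ 1/L := by
  have := Real.log_le_sub_one_of_pos (show (0:ℝ) < 1 + 1/L by positivity)
  linarith

lemma my_le_log (L : ℝ) (hL : 0 < L) : 1/(L+1) ≤ Real.log (1 + 1/L) := by
  have h1 : (1:ℝ) + 1/L = (L/(L+1))⁻¹ := by field_simp
  have h2 : (0:ℝ) < L/(L+1) := by positivity
  have h3 := Real.log_le_sub_one_of_pos h2
  rw [h1, Real.log_inv]
  have h4 : L/(L+1) - 1 = -(1/(L+1)) := by field_simp; ring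
  linarith

lemma my_sqrtR_atTop : Filter.Tendsto Real.sqrt Filter.atTop Filter.atTop := by
  apply Filter.tendsto_atTop.2; intro M
  filter_upwards [Filter.eventually_ge_atTop ((max 0 M) ^ 2)] with x hx
  calc M ≤ max 0 M := le_max_right _ _
    _ = Real.sqrt ((max 0 M)^2) := (Real.sqrt_sq (le_max_left 0 M)).symm
    _ ≤ Real.sqrt x := Real.sqrt_le_sqrt hx

lemma my_sqrt_gap (x : ℝ) (hx : 1 ≤ x) :
    4 / Real.sqrt x ≤ 10 * (Real.sqrt (x+1) - Real.sqrt x) := by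
  set s := Real.sqrt x with hs
  set t := Real.sqrt (x+1) with ht
  have hs1 : 1 ≤ s := by
    rw [hs, show (1:ℝ) = Real.sqrt 1 by simp]; exact Real.sqrt_le_sqrt hx
  have hs2 : s^2 = x := Real.sq_sqrt (by linarith)
  have ht2 : t^2 = x + 1 := Real.sq_sqrt (by linarith)
  have hst : s ≤ t := Real.sqrt_le_sqrt (by linarith)
  have ht32 : t ≤ (3/2) * s := by
    have h9 : Real.sqrt (x+1) ≤ Real.sqrt ((9/4) * x) := Real.sqrt_le_sqrt (by linarith)
    have : Real.sqrt ((9/4) * x) = (3/2) * s := by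
      rw [Real.sqrt_mul (by norm_num), show (9/4:ℝ) = (3/2)^2 by norm_num,
        Real.sqrt_sq (by norm_num)]
    rw [← this]; exact h9
  have hspos : (0:ℝ) < s := by linarith
  rw [div_le_iff₀ hspos]
  have hmul : (t - s) * (t + s) = 1 := by nlinarith
  nlinarith [mul_nonneg (sub_nonneg.2 hst) (by linarith : (0:ℝ) ≤ 6*s - 4*t)]

lemma my_step (L : ℝ) (hL : 1/3 ≤ L) :
    L < L + Real.log (1 + 1/L) ∧
    L^2 + 2 - 2/(L+1) ≤ (L + Real.log (1 + 1/L))^2 ∧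
    (L + Real.log (1 + 1/L))^2 ≤ L^2 + 2 + 1/L^2 := by
  have hL0 : (0:ℝ) < L := by linarith
  have h1 := my_log_le L hL0
  have h2 := my_le_log L hL0
  have hlogpos : 0 < Real.log (1 + 1/L) := lt_of_lt_of_le (by positivity) h2
  refine ⟨by linarith, ?_, ?_⟩
  · have hle : L + 1/(L+1) ≤ L + Real.log (1 + 1/L) := by linarith
    have hnn : (0:ℝ) ≤ L + 1/(L+1) := by positivity
    have hsq : (L + 1/(L+1))^2 ≤ (L + Real.log (1 + 1/L))^2 := pow_le_pow_left₀ hnn hle 2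
    have hexp : (L + 1/(L+1))^2 = L^2 + 2 - 2/(L+1) + 1/(L+1)^2 := by
      field_simp; ring
    have : (0:ℝ) ≤ 1/(L+1)^2 := by positivity
    linarith
  · have hle : L + Real.log (1 + 1/L) ≤ L + 1/L := by linarith
    have hnn : (0:ℝ) ≤ L + Real.log (1 + 1/L) := by linarith
    have hsq : (L + Real.log (1 + 1/L))^2 ≤ (L + 1/L)^2 := pow_le_pow_left₀ hnn hle 2
    have hexp : (L + 1/L)^2 = L^2 + 2 + 1/L^2 := by field_simp; ring
    linarith

theorem stmt15 (b : ℕ → ℝ) (hb1 : b 1 = 3 / 2)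
    (hrec : ∀ n : ℕ, 1 ≤ n → b (n + 1) = b n * (1 + 1 / Real.log (b n))) :
    (∀ n : ℕ, 1 ≤ n → b n < b (n + 1)) ∧
    Filter.Tendsto b Filter.atTop Filter.atTop ∧
    Filter.Tendsto (fun n : ℕ => Real.log (b n) / Real.sqrt (2 * n))
      Filter.atTop (nhds 1) := by
  have H : ∀ n : ℕ, 1 ≤ n →
      1 < b n ∧ 1/3 ≤ Real.log (b n) ∧ ((n:ℝ)-1)/2 ≤ (Real.log (b n))^2 := by
    intro n hn
    induction n, hn using Nat.le_induction with
    | base =>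
      refine ⟨by rw [hb1]; norm_num, by rw [hb1]; exact my_log_ge_third, ?_⟩
      norm_num
      positivity
    | succ n hn ih =>
      obtain ⟨hb, hL3, hLsq⟩ := ih
      have hL0 : (0:ℝ) < Real.log (b n) := by linarith
      have hbpos : (0:ℝ) < b n := by linarith
      have hbsucc : b (n+1) = b n * (1 + 1/Real.log (b n)) := hrec n hn
      have hb1' : 1 < b (n+1) := by
        rw [hbsucc]
        nlinarith [one_div_pos.2 hL0]
      have hlogsucc : Real.log (b (n+1)) =
          Real.log (b n) + Real.log (1 + 1/Real.log (b n)) := by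
        rw [hbsucc, Real.log_mul (by positivity) (by positivity)]
      obtain ⟨hlt, hlow, hup⟩ := my_step (Real.log (b n)) hL3
      refine ⟨hb1', by rw [hlogsucc]; linarith, ?_⟩
      rw [hlogsucc]
      have hdiv : 2/(Real.log (b n)+1) ≤ 3/2 := by
        rw [div_le_iff₀ (by linarith)]; linarith
      push_cast
      linarith
  have part1 : ∀ n : ℕ, 1 ≤ n → b n < b (n+1) := by
    intro n hn
    obtain ⟨hb, hL3, _⟩ := H n hn
    have hL0 : (0:ℝ) < Real.log (b n) := by linarith
    rw [hrec n hn]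
    nlinarith [one_div_pos.2 hL0]
  -- log b n → ∞
  have hLge : ∀ n : ℕ, 1 ≤ n → Real.sqrt (((n:ℝ)-1)/2) ≤ Real.log (b n) := by
    intro n hn
    obtain ⟨_, hL3, hLsq⟩ := H n hn
    calc Real.sqrt (((n:ℝ)-1)/2) ≤ Real.sqrt ((Real.log (b n))^2) := Real.sqrt_le_sqrt hLsq
      _ = Real.log (b n) := Real.sqrt_sq (by linarith)
  have htail : Tendsto (fun n : ℕ => ((n:ℝ)-1)/2) atTop atTop := by
    have h1 : Tendsto (fun n : ℕ => (n:ℝ) + (-1)) atTop atTop :=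
      tendsto_atTop_add_const_right _ (-1) tendsto_natCast_atTop_atTop
    have h2 : Tendsto (fun n : ℕ => ((n:ℝ) + (-1))/2) atTop atTop :=
      h1.atTop_div_const (by norm_num)
    simpa [sub_eq_add_neg] using h2
  have hLtop : Tendsto (fun n : ℕ => Real.log (b n)) atTop atTop := by
    apply tendsto_atTop_mono' atTop _ (my_sqrtR_atTop.comp htail)
    filter_upwards [eventually_ge_atTop 1] with n hn
    exact hLge n hn
  have part2 : Tendsto b atTop atTop := by
    apply (Real.tendsto_exp_atTop.comp hLtop).congr'
    filter_upwards [eventually_ge_atTop 1] with n hn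
    have hb := (H n hn).1
    exact Real.exp_log (by linarith)
  -- error bounds
  have Hdiff : ∀ n : ℕ, 2 ≤ n →
      |(Real.log (b (n+1)))^2 - 2*((n:ℝ)+1) - ((Real.log (b n))^2 - 2*(n:ℝ))|
        ≤ 4 / Real.sqrt n := by
    intro n hn
    have hn1 : 1 ≤ n := by omega
    obtain ⟨hb, hL3, hLsq⟩ := H n hn1
    have hL0 : (0:ℝ) < Real.log (b n) := by linarith
    have hbpos : (0:ℝ) < b n := by linarith
    have hn2 : (2:ℝ) ≤ (n:ℝ) := by exact_mod_cast hn
    have hL12 : (1/2 : ℝ) ≤ Real.log (b n) := by nlinarith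
    have hsn : Real.sqrt n ≤ 2 * Real.log (b n) := by
      calc Real.sqrt n ≤ Real.sqrt ((2*Real.log (b n))^2) :=
            Real.sqrt_le_sqrt (by nlinarith)
        _ = 2 * Real.log (b n) := Real.sqrt_sq (by linarith)
    have hsnpos : (0:ℝ) < Real.sqrt n := Real.sqrt_pos.2 (by linarith)
    have h1 : 1/(Real.log (b n))^2 ≤ 4/Real.sqrt n := by
      rw [div_le_div_iff₀ (by positivity) hsnpos]
      nlinarith
    have h2 : 2/(Real.log (b n)+1) ≤ 4/Real.sqrt n := by
      rw [div_le_div_iff₀ (by linarith) hsnpos]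
      nlinarith
    have hlogsucc : Real.log (b (n+1)) =
        Real.log (b n) + Real.log (1 + 1/Real.log (b n)) := by
      rw [hrec n hn1, Real.log_mul (by positivity) (by positivity)]
    obtain ⟨hlt, hlow, hup⟩ := my_step (Real.log (b n)) hL3
    rw [hlogsucc, abs_le]
    constructor
    · linarith
    · linarith
  set C : ℝ := |(Real.log (b 2))^2 - 4| with hC
  have Hbound : ∀ n : ℕ, 2 ≤ n →
      |(Real.log (b n))^2 - 2*(n:ℝ)| ≤ C + 10 * Real.sqrt n := by
    intro n hn
    induction n, hn using Nat.le_induction with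
    | base =>
      have hpos : (0:ℝ) ≤ 10 * Real.sqrt 2 := by positivity
      have : |(Real.log (b 2))^2 - 2*((2:ℕ):ℝ)| = C := by
        rw [hC]; norm_num
      rw [this]
      push_cast
      linarith
    | succ n hn ih =>
      have hd := Hdiff n hn
      have h1n : (1:ℝ) ≤ (n:ℝ) := by exact_mod_cast hn.trans' (by norm_num)
      have hgap := my_sqrt_gap (n:ℝ) h1n
      have htri : |(Real.log (b (n+1)))^2 - 2*((n:ℝ)+1)|
          ≤ |(Real.log (b n))^2 - 2*(n:ℝ)| + 4/Real.sqrt n := by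
        have heq : (Real.log (b (n+1)))^2 - 2*((n:ℝ)+1) =
            ((Real.log (b (n+1)))^2 - 2*((n:ℝ)+1) - ((Real.log (b n))^2 - 2*(n:ℝ)))
            + ((Real.log (b n))^2 - 2*(n:ℝ)) := by ring
        rw [heq]
        calc _ ≤ |(Real.log (b (n+1)))^2 - 2*((n:ℝ)+1) - ((Real.log (b n))^2 - 2*(n:ℝ))|
              + |(Real.log (b n))^2 - 2*(n:ℝ)| := abs_add_le _ _
          _ ≤ _ := by linarith
      push_cast
      calc |(Real.log (b (n+1)))^2 - 2*((n:ℝ)+1)|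
          ≤ |(Real.log (b n))^2 - 2*(n:ℝ)| + 4/Real.sqrt n := htri
        _ ≤ C + 10*Real.sqrt n + 10*(Real.sqrt ((n:ℝ)+1) - Real.sqrt n) := by linarith
        _ = C + 10*Real.sqrt ((n:ℝ)+1) := by ring
  -- limits
  have hnsqrt : Tendsto (fun n : ℕ => Real.sqrt n) atTop atTop :=
    my_sqrtR_atTop.comp tendsto_natCast_atTop_atTop
  have hinvsqrt : Tendsto (fun n : ℕ => (Real.sqrt n)⁻¹) atTop (nhds 0) :=
    tendsto_inv_atTop_zero.comp hnsqrt
  have hinvn : Tendsto (fun n : ℕ => ((n:ℝ))⁻¹) atTop (nhds 0) :=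
    tendsto_inv_atTop_zero.comp tendsto_natCast_atTop_atTop
  have hg : Tendsto (fun n : ℕ => (C + 10*Real.sqrt n)/(2*(n:ℝ))) atTop (nhds 0) := by
    have h1 : Tendsto (fun n : ℕ => (C/2) * ((n:ℝ))⁻¹ + 5 * (Real.sqrt n)⁻¹)
        atTop (nhds 0) := by
      have := (hinvn.const_mul (C/2)).add (hinvsqrt.const_mul 5)
      simpa using this
    apply h1.congr'
    filter_upwards [eventually_ge_atTop 1] with n hn
    have hnpos : (0:ℝ) < (n:ℝ) := by exact_mod_cast hn
    have hsq : Real.sqrt n * Real.sqrt n = (n:ℝ) := Real.mul_self_sqrt hnpos.le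
    have hspos : (0:ℝ) < Real.sqrt n := Real.sqrt_pos.2 hnpos
    have key : (Real.sqrt n)⁻¹ = Real.sqrt n / (n:ℝ) := by
      rw [eq_div_iff hnpos.ne', inv_mul_eq_div, div_eq_iff hspos.ne']; linarith [hsq]
    rw [key]
    field_simp
    ring
  have h0 : Tendsto (fun n : ℕ => ((Real.log (b n))^2 - 2*(n:ℝ))/(2*(n:ℝ)))
      atTop (nhds 0) := by
    apply squeeze_zero_norm' _ hg
    filter_upwards [eventually_ge_atTop 2] with n hn
    have hbd := Hbound n hn
    have hnpos : (0:ℝ) < (n:ℝ) := by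
      have : (2:ℝ) ≤ (n:ℝ) := by exact_mod_cast hn
      linarith
    rw [Real.norm_eq_abs, abs_div, abs_of_pos (by positivity : (0:ℝ) < 2*(n:ℝ))]
    gcongr
  have hsq2 : Tendsto (fun n : ℕ => (Real.log (b n))^2/(2*(n:ℝ))) atTop (nhds 1) := by
    have h1 : Tendsto (fun n : ℕ => ((Real.log (b n))^2 - 2*(n:ℝ))/(2*(n:ℝ)) + 1)
        atTop (nhds 1) := by
      simpa using h0.add (tendsto_const_nhds (x := (1:ℝ)))
    apply h1.congr'
    filter_upwards [eventually_ge_atTop 1] with n hn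
    have hnpos : (0:ℝ) < (n:ℝ) := by exact_mod_cast hn
    field_simp
    ring
  refine ⟨part1, part2, ?_⟩
  have hfin := (Real.continuous_sqrt.tendsto 1).comp hsq2
  rw [Real.sqrt_one] at hfin
  apply hfin.congr'
  filter_upwards [eventually_ge_atTop 1] with n hn
  obtain ⟨_, hL3, _⟩ := H n hn
  have hL0 : (0:ℝ) ≤ Real.log (b n) := by linarith
  show Real.sqrt ((Real.log (b n))^2/(2*(n:ℝ))) = Real.log (b n)/Real.sqrt (2*(n:ℝ))
  rw [Real.sqrt_div (by positivity), Real.sqrt_sq hL0]
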